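/- For every integer n ≥ 1, with [n] = (qⁿ − q⁻ⁿ)/(q − q⁻¹), the following hold in Ω¹: aⁿ·e_a = qⁿ e_a aⁿ + q^{n−1}[n]μ e_c a^{n−1}c + qμ²[n] e_d aⁿ; bⁿ·e_a = qⁿ e_a bⁿ + q^{n−1}[n]μ e_c b^{n−1}d + qμ²[n] e_d bⁿ; cⁿ·e_a = q⁻ⁿ e_a cⁿ + q^{1−n}[n]μ e_b c^{n−1}a; dⁿ·e_a = q⁻ⁿ e_a dⁿ + q^{1−n}[n]μ e_b d^{n−1}b; aⁿ·e_b = e_b aⁿ + qμ[n] e_d a^{n−1}c; bⁿ·e_b = e_b bⁿ + qμ[n] e_d b^{n−1}d; cⁿ·e_b = e_b cⁿ; dⁿ·e_b = e_b dⁿ; aⁿ·e_c = e_c aⁿ; bⁿ·e_c = e_c bⁿ; cⁿ·e_c = e_c cⁿ + qμ[n] e_d c^{n−1}a; dⁿ·e_c = e_c dⁿ + qμ[n] e_d d^{n−1}b; aⁿ·e_d = q⁻ⁿ e_d aⁿ; bⁿ·e_d = q⁻ⁿ e_d bⁿ; cⁿ·e_d = qⁿ e_d cⁿ; dⁿ·e_d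 = qⁿ e_d dⁿ. -/

import Mathlib

set_option maxHeartbeats 1600000

noncomputable section

open MulOpposite

structure Ctx where
  q : ℂ
  hq : IsPrimitiveRoot q 3
  A : Type
  [ringA : Ring A]
  [algA : Algebra ℂ A]
  a : A
  b : A
  c : A
  d : A
  rel_ba : b * a = q • (a * b)
  rel_ca : c * a = q • (a * c)
  rel_db : d * b = q • (b * d)
  rel_dc : d * c = q • (c * d)
  rel_cb : c * b = b * c
  rel_da : d * a - a * d = (q * (1 - (q ^ 2)⁻¹)) • (b * c)
  rel_ad : a * d - q⁻¹ • (b * c) = 1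
  rel_b3 : b ^ 3 = 0
  rel_c3 : c ^ 3 = 0
  rel_a3 : a ^ 3 = 1
  rel_d3 : d ^ 3 = 1
  basA : Module.Basis (Fin 3 × Fin 3 × Fin 3) ℂ A
  basA_eq : ∀ i : Fin 3 × Fin 3 × Fin 3,
    basA i = a ^ (i.1 : ℕ) * b ^ (i.2.1 : ℕ) * c ^ (i.2.2 : ℕ)
  Om1 : Type
  [agOm : AddCommGroup Om1]
  [mC : Module ℂ Om1]
  [mL : Module A Om1]
  [mR : Module Aᵐᵒᵖ Om1]
  [scLR : SMulCommClass A Aᵐᵒᵖ Om1]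
  [tL : IsScalarTower ℂ A Om1]
  [tR : IsScalarTower ℂ Aᵐᵒᵖ Om1]
  basOm : Module.Basis (Fin 4) Aᵐᵒᵖ Om1
  bm_c_eb : c • basOm 1 = op c • basOm 1
  bm_d_eb : d • basOm 1 = op d • basOm 1
  bm_c_ed : c • basOm 3 = q • (op c • basOm 3)
  bm_d_ed : d • basOm 3 = q • (op d • basOm 3)
  bm_a_ec : a • basOm 2 = op a • basOm 2
  bm_b_ec : b • basOm 2 = op b • basOm 2
  bm_a_ed : a • basOm 3 = q⁻¹ • (op a • basOm 3)
  bm_b_ed : b • basOm 3 = q⁻¹ • (op b • basOm 3)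
  bm_a_eb : a • basOm 1 = op a • basOm 1 + (q * (1 - (q ^ 2)⁻¹)) • (op c • basOm 3)
  bm_b_eb : b • basOm 1 = op b • basOm 1 + (q * (1 - (q ^ 2)⁻¹)) • (op d • basOm 3)
  bm_c_ec : c • basOm 2 = op c • basOm 2 + (q * (1 - (q ^ 2)⁻¹)) • (op a • basOm 3)
  bm_d_ec : d • basOm 2 = op d • basOm 2 + (q * (1 - (q ^ 2)⁻¹)) • (op b • basOm 3)
  bm_c_ea : c • basOm 0 = q⁻¹ • (op c • basOm 0) + (1 - (q ^ 2)⁻¹) • (op a • basOm 1)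
  bm_d_ea : d • basOm 0 = q⁻¹ • (op d • basOm 0) + (1 - (q ^ 2)⁻¹) • (op b • basOm 1)
  bm_a_ea : a • basOm 0 = q • (op a • basOm 0) + (1 - (q ^ 2)⁻¹) • (op c • basOm 2) +
    (q * (1 - (q ^ 2)⁻¹) ^ 2) • (op a • basOm 3)
  bm_b_ea : b • basOm 0 = q • (op b • basOm 0) + (1 - (q ^ 2)⁻¹) • (op d • basOm 2) +
    (q * (1 - (q ^ 2)⁻¹) ^ 2) • (op b • basOm 3)

attribute [instance] Ctx.ringA Ctx.algA Ctx.agOm Ctx.mC Ctx.mL Ctx.mR Ctx.scLR Ctx.tL Ctx.tR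

noncomputable def Ctx.mu (X : Ctx) : ℂ := 1 - (X.q ^ 2)⁻¹

/-- θ = e_a + e_d -/
noncomputable def Ctx.th (X : Ctx) : X.Om1 := X.basOm 0 + X.basOm 3

/-- d₀ f = f·θ - θ·f (left action minus right action) -/
noncomputable def Ctx.d0 (X : Ctx) (f : X.A) : X.Om1 := f • X.th - op f • X.th

/-- the quantum integer [n] = (qⁿ - q⁻ⁿ)/(q - q⁻¹) -/
noncomputable def brk (q : ℂ) (n : ℕ) : ℂ := (q ^ n - q⁻¹ ^ n) / (q - q⁻¹)

set_option linter.unusedSectionVars false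


lemma brk_one (q : ℂ) (hd : q - q⁻¹ ≠ 0) : brk q 1 = 1 := by
  simp [brk, div_self hd]

lemma brk_succ (q : ℂ) (hd : q - q⁻¹ ≠ 0) (n : ℕ) :
    brk q (n + 1) = q ^ n + q⁻¹ * brk q n := by
  rw [brk, brk, div_eq_iff hd, add_mul, mul_assoc, div_mul_cancel₀ _ hd]
  ring

lemma brk_succ' (q : ℂ) (hd : q - q⁻¹ ≠ 0) (n : ℕ) :
    brk q (n + 1) = q⁻¹ ^ n + q * brk q n := by
  rw [brk, brk, div_eq_iff hd, add_mul, mul_assoc, div_mul_cancel₀ _ hd]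
  ring

section helpers
variable {A M : Type} [Ring A] [Algebra ℂ A] [AddCommGroup M] [Module ℂ M]
  [Module A M] [Module Aᵐᵒᵖ M] [SMulCommClass A Aᵐᵒᵖ M]
  [IsScalarTower ℂ A M] [IsScalarTower ℂ Aᵐᵒᵖ M]

lemma opop (y z : A) (m : M) : op y • op z • m = op (z * y) • m := by
  rw [op_mul, mul_smul]

lemma csmul (s : ℂ) (x : A) (m : M) : x • (s • m) = s • (x • m) :=
  smul_comm x s m

lemma op_csmul (s : ℂ) (y : A) (m : M) : op y • (s • m) = s • (op y • m) :=
  smul_comm (op y) s m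

lemma lr_comm (x y : A) (m : M) : x • (op y • m) = op y • (x • m) :=
  smul_comm x (op y) m

lemma op_scalar (s : ℂ) (y : A) (m : M) : op (s • y) • m = s • (op y • m) := by
  rw [op_smul, smul_assoc]

lemma flip_comm (x y : A) (w : ℂ) (hw : w ≠ 0) (h : y * x = w • (x * y)) :
    x * y = w⁻¹ • (y * x) := by
  rw [h, smul_smul, inv_mul_cancel₀ hw, one_smul]

lemma comm_pow (x z : A) (w : ℂ) (h : z * x = w • (x * z)) :
    ∀ n : ℕ, z * x ^ n = w ^ n • (x ^ n * z) := by
  intro n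
  induction n with
  | zero => simp
  | succ n ih =>
    rw [pow_succ', ← mul_assoc, h, smul_mul_assoc, mul_assoc, ih, mul_smul_comm,
      smul_smul, pow_succ', mul_assoc]

lemma typeI (x : A) (s : ℂ) (m : M) (h : x • m = s • (op x • m)) :
    ∀ n : ℕ, x ^ n • m = s ^ n • (op (x ^ n) • m) := by
  intro n
  induction n with
  | zero => simp
  | succ n ih =>
    rw [pow_succ', mul_smul, ih, csmul, lr_comm, h, op_csmul, opop, ← pow_succ',
      smul_smul, ← pow_succ]

lemma typeII (x z : A) (m m' : M) (s t u w : ℂ) (C : ℕ → ℂ)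
    (h1 : x • m = s • (op x • m) + t • (op z • m'))
    (h2 : x • m' = u • (op x • m'))
    (h3 : z * x = w • (x * z))
    (hC1 : C 1 = t)
    (hCs : ∀ n, C (n+2) = s^(n+1) * t * w^(n+1) + u * C (n+1)) :
    ∀ n : ℕ, x^(n+1) • m = s^(n+1) • (op (x^(n+1)) • m) +
      C (n+1) • (op (x^n * z) • m') := by
  intro n
  induction n with
  | zero => simpa [hC1] using h1
  | succ n ih =>
    conv_lhs => rw [pow_succ', mul_smul, ih]
    simp only [smul_add, csmul, lr_comm, h1, h2, op_csmul, smul_smul, ← op_mul]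
    rw [comm_pow x z w h3, op_scalar]
    simp only [← mul_assoc, ← pow_succ', smul_smul]
    rw [hCs]
    generalize (op (x^(n+1+1)) • m : M) = v1
    generalize (op (x^(n+1) * z) • m' : M) = v2
    module

lemma typeIII (x z : A) (m m2 m3 : M) (s t r u w : ℂ) (C D : ℕ → ℂ)
    (h1 : x • m = s • (op x • m) + t • (op z • m2) + r • (op x • m3))
    (h2 : x • m2 = op x • m2)
    (h3 : x • m3 = u • (op x • m3))
    (h4 : z * x = w • (x * z))
    (hC1 : C 1 = t) (hD1 : D 1 = r)
    (hCs : ∀ n, C (n+2) = s^(n+1) * t * w^(n+1) + C (n+1))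
    (hDs : ∀ n, D (n+2) = s^(n+1) * r + u * D (n+1)) :
    ∀ n : ℕ, x^(n+1) • m = s^(n+1) • (op (x^(n+1)) • m) +
      C (n+1) • (op (x^n * z) • m2) + D (n+1) • (op (x^(n+1)) • m3) := by
  intro n
  induction n with
  | zero => simpa [hC1, hD1] using h1
  | succ n ih =>
    conv_lhs => rw [pow_succ', mul_smul, ih]
    simp only [smul_add, csmul, lr_comm, h1, h2, h3, op_csmul, smul_smul, ← op_mul]
    rw [comm_pow x z w h4, op_scalar]
    simp only [← mul_assoc, ← pow_succ', smul_smul]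
    rw [hCs, hDs]
    generalize (op (x^(n+1+1)) • m : M) = v1
    generalize (op (x^(n+1) * z) • m2 : M) = v2
    generalize (op (x^(n+1+1)) • m3 : M) = v3
    module

end helpers

theorem stmt1 (X : Ctx) (n : ℕ) (hn : 1 ≤ n) :
    ((X.a ^ n) • X.basOm 0 = (X.q ^ n) • (op (X.a ^ n) • X.basOm 0) +
      (X.q ^ (n - 1) * brk X.q n * X.mu) • (op (X.a ^ (n - 1) * X.c) • X.basOm 2) +
      (X.q * X.mu ^ 2 * brk X.q n) • (op (X.a ^ n) • X.basOm 3)) ∧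
    ((X.b ^ n) • X.basOm 0 = (X.q ^ n) • (op (X.b ^ n) • X.basOm 0) +
      (X.q ^ (n - 1) * brk X.q n * X.mu) • (op (X.b ^ (n - 1) * X.d) • X.basOm 2) +
      (X.q * X.mu ^ 2 * brk X.q n) • (op (X.b ^ n) • X.basOm 3)) ∧
    ((X.c ^ n) • X.basOm 0 = (X.q⁻¹ ^ n) • (op (X.c ^ n) • X.basOm 0) +
      (X.q⁻¹ ^ (n - 1) * brk X.q n * X.mu) • (op (X.c ^ (n - 1) * X.a) • X.basOm 1)) ∧
    ((X.d ^ n) • X.basOm 0 = (X.q⁻¹ ^ n) • (op (X.d ^ n) • X.basOm 0) +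
      (X.q⁻¹ ^ (n - 1) * brk X.q n * X.mu) • (op (X.d ^ (n - 1) * X.b) • X.basOm 1)) ∧
    ((X.a ^ n) • X.basOm 1 = op (X.a ^ n) • X.basOm 1 +
      (X.q * X.mu * brk X.q n) • (op (X.a ^ (n - 1) * X.c) • X.basOm 3)) ∧
    ((X.b ^ n) • X.basOm 1 = op (X.b ^ n) • X.basOm 1 +
      (X.q * X.mu * brk X.q n) • (op (X.b ^ (n - 1) * X.d) • X.basOm 3)) ∧
    ((X.c ^ n) • X.basOm 1 = op (X.c ^ n) • X.basOm 1) ∧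
    ((X.d ^ n) • X.basOm 1 = op (X.d ^ n) • X.basOm 1) ∧
    ((X.a ^ n) • X.basOm 2 = op (X.a ^ n) • X.basOm 2) ∧
    ((X.b ^ n) • X.basOm 2 = op (X.b ^ n) • X.basOm 2) ∧
    ((X.c ^ n) • X.basOm 2 = op (X.c ^ n) • X.basOm 2 +
      (X.q * X.mu * brk X.q n) • (op (X.c ^ (n - 1) * X.a) • X.basOm 3)) ∧
    ((X.d ^ n) • X.basOm 2 = op (X.d ^ n) • X.basOm 2 +
      (X.q * X.mu * brk X.q n) • (op (X.d ^ (n - 1) * X.b) • X.basOm 3)) ∧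
    ((X.a ^ n) • X.basOm 3 = (X.q⁻¹ ^ n) • (op (X.a ^ n) • X.basOm 3)) ∧
    ((X.b ^ n) • X.basOm 3 = (X.q⁻¹ ^ n) • (op (X.b ^ n) • X.basOm 3)) ∧
    ((X.c ^ n) • X.basOm 3 = (X.q ^ n) • (op (X.c ^ n) • X.basOm 3)) ∧
    ((X.d ^ n) • X.basOm 3 = (X.q ^ n) • (op (X.d ^ n) • X.basOm 3)) := by
  obtain ⟨k, rfl⟩ : ∃ k, n = k + 1 := ⟨n - 1, (Nat.succ_pred_eq_of_pos hn).symm⟩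
  have hq0 : X.q ≠ 0 := X.hq.ne_zero (by norm_num)
  have hq2 : X.q ^ 2 ≠ 1 := X.hq.pow_ne_one_of_pos_of_lt (by norm_num) (by norm_num)
  have hd : X.q - X.q⁻¹ ≠ 0 := by
    intro h
    apply hq2
    have h' : X.q = X.q⁻¹ := sub_eq_zero.mp h
    rw [sq]
    nth_rewrite 2 [h']
    exact mul_inv_cancel₀ hq0
  have hac : X.a * X.c = X.q⁻¹ • (X.c * X.a) := flip_comm X.a X.c X.q hq0 X.rel_ca
  have hbd : X.b * X.d = X.q⁻¹ • (X.d * X.b) := flip_comm X.b X.d X.q hq0 X.rel_db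
  refine ⟨?_, ?_, ?_, ?_, ?_, ?_, ?_, ?_, ?_, ?_, ?_, ?_, ?_, ?_, ?_, ?_⟩
  · -- a, e0 : typeIII
    exact typeIII X.a X.c (X.basOm 0) (X.basOm 2) (X.basOm 3) X.q X.mu (X.q * X.mu ^ 2)
      X.q⁻¹ X.q (fun m => X.q ^ (m - 1) * brk X.q m * X.mu)
      (fun m => X.q * X.mu ^ 2 * brk X.q m)
      X.bm_a_ea X.bm_a_ec X.bm_a_ed X.rel_ca
      (by simp [brk_one _ hd])
      (by simp [brk_one _ hd])
      (by
        intro m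
        show X.q ^ (m + 1) * brk X.q (m + 2) * X.mu = _
        rw [brk_succ X.q hd]
        simp only [Nat.add_sub_cancel, add_tsub_cancel_right]
        field_simp
        ring)
      (by
        intro m
        show X.q * X.mu ^ 2 * brk X.q (m + 2) = _
        rw [brk_succ X.q hd]
        ring) k
  · -- b, e0 : typeIII
    exact typeIII X.b X.d (X.basOm 0) (X.basOm 2) (X.basOm 3) X.q X.mu (X.q * X.mu ^ 2)
      X.q⁻¹ X.q (fun m => X.q ^ (m - 1) * brk X.q m * X.mu)
      (fun m => X.q * X.mu ^ 2 * brk X.q m)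
      X.bm_b_ea X.bm_b_ec X.bm_b_ed X.rel_db
      (by simp [brk_one _ hd])
      (by simp [brk_one _ hd])
      (by
        intro m
        show X.q ^ (m + 1) * brk X.q (m + 2) * X.mu = _
        rw [brk_succ X.q hd]
        simp only [Nat.add_sub_cancel, add_tsub_cancel_right]
        field_simp
        ring)
      (by
        intro m
        show X.q * X.mu ^ 2 * brk X.q (m + 2) = _
        rw [brk_succ X.q hd]
        ring) k
  · -- c, e0 : typeII
    exact typeII X.c X.a (X.basOm 0) (X.basOm 1) X.q⁻¹ X.mu 1 X.q⁻¹
      (fun m => X.q⁻¹ ^ (m - 1) * brk X.q m * X.mu)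
      X.bm_c_ea (by rw [one_smul]; exact X.bm_c_eb) hac
      (by simp [brk_one _ hd])
      (by
        intro m
        show X.q⁻¹ ^ (m + 1) * brk X.q (m + 2) * X.mu =
          X.q⁻¹ ^ (m + 1) * X.mu * X.q⁻¹ ^ (m + 1) + 1 * (X.q⁻¹ ^ m * brk X.q (m + 1) * X.mu)
        rw [brk_succ' X.q hd]
        field_simp
        have h1 : 1 / X.q * X.q = 1 := one_div_mul_cancel hq0
        linear_combination (X.mu * brk X.q (m + 1) * (1 / X.q) ^ m) * h1) k
  · -- d, e0 : typeII
    exact typeII X.d X.b (X.basOm 0) (X.basOm 1) X.q⁻¹ X.mu 1 X.q⁻¹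
      (fun m => X.q⁻¹ ^ (m - 1) * brk X.q m * X.mu)
      X.bm_d_ea (by rw [one_smul]; exact X.bm_d_eb) hbd
      (by simp [brk_one _ hd])
      (by
        intro m
        show X.q⁻¹ ^ (m + 1) * brk X.q (m + 2) * X.mu =
          X.q⁻¹ ^ (m + 1) * X.mu * X.q⁻¹ ^ (m + 1) + 1 * (X.q⁻¹ ^ m * brk X.q (m + 1) * X.mu)
        rw [brk_succ' X.q hd]
        field_simp
        have h1 : 1 / X.q * X.q = 1 := one_div_mul_cancel hq0
        linear_combination (X.mu * brk X.q (m + 1) * (1 / X.q) ^ m) * h1) k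
  · -- a, e1 : typeII
    simpa using typeII X.a X.c (X.basOm 1) (X.basOm 3) 1 (X.q * X.mu) X.q⁻¹ X.q
      (fun m => X.q * X.mu * brk X.q m)
      (by rw [one_smul]; exact X.bm_a_eb) X.bm_a_ed X.rel_ca
      (by simp [brk_one _ hd])
      (by
        intro m
        show X.q * X.mu * brk X.q (m + 2) = _
        rw [brk_succ X.q hd]
        ring) k
  · -- b, e1 : typeII
    simpa using typeII X.b X.d (X.basOm 1) (X.basOm 3) 1 (X.q * X.mu) X.q⁻¹ X.q
      (fun m => X.q * X.mu * brk X.q m)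
      (by rw [one_smul]; exact X.bm_b_eb) X.bm_b_ed X.rel_db
      (by simp [brk_one _ hd])
      (by
        intro m
        show X.q * X.mu * brk X.q (m + 2) = _
        rw [brk_succ X.q hd]
        ring) k
  · -- c, e1 : typeI
    simpa using typeI X.c 1 (X.basOm 1) (by rw [one_smul]; exact X.bm_c_eb) (k + 1)
  · -- d, e1 : typeI
    simpa using typeI X.d 1 (X.basOm 1) (by rw [one_smul]; exact X.bm_d_eb) (k + 1)
  · -- a, e2 : typeI
    simpa using typeI X.a 1 (X.basOm 2) (by rw [one_smul]; exact X.bm_a_ec) (k + 1)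
  · -- b, e2 : typeI
    simpa using typeI X.b 1 (X.basOm 2) (by rw [one_smul]; exact X.bm_b_ec) (k + 1)
  · -- c, e2 : typeII
    simpa using typeII X.c X.a (X.basOm 2) (X.basOm 3) 1 (X.q * X.mu) X.q X.q⁻¹
      (fun m => X.q * X.mu * brk X.q m)
      (by rw [one_smul]; exact X.bm_c_ec) X.bm_c_ed hac
      (by simp [brk_one _ hd])
      (by
        intro m
        show X.q * X.mu * brk X.q (m + 2) = _
        rw [brk_succ' X.q hd]
        field_simp
        ring) k
  · -- d, e2 : typeII
    simpa using typeII X.d X.b (X.basOm 2) (X.basOm 3) 1 (X.q * X.mu) X.q X.q⁻¹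
      (fun m => X.q * X.mu * brk X.q m)
      (by rw [one_smul]; exact X.bm_d_ec) X.bm_d_ed hbd
      (by simp [brk_one _ hd])
      (by
        intro m
        show X.q * X.mu * brk X.q (m + 2) = _
        rw [brk_succ' X.q hd]
        field_simp
        ring) k
  · -- a, e3 : typeI
    exact typeI X.a X.q⁻¹ (X.basOm 3) X.bm_a_ed (k + 1)
  · -- b, e3 : typeI
    exact typeI X.b X.q⁻¹ (X.basOm 3) X.bm_b_ed (k + 1)
  · -- c, e3 : typeI
    exact typeI X.c X.q (X.basOm 3) X.bm_c_ed (k + 1)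
  · -- d, e3 : typeI
    exact typeI X.d X.q (X.basOm 3) X.bm_d_ed (k + 1)
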